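/- Let L be a linear order and M an indecomposable well-order such that there is no order embedding of M into L. Let n be a natural number and N_0, …, N_{n−1} linear orders each of which is order isomorphic to L or order isomorphic to M. If for some natural number k there is an order embedding of the lexicographic sum Σ_{j<k} M (i.e., k copies of M, which is M·k) into Σ_{i<n} N_i, then the number of indices i < n for which N_i is order isomorphic to M is at least k. -/

import Mathlib

/-- A well-order `M` is *indecomposable* if for every `m : M`, `M` order-embeds into the
final segment `{x : M // m ≤ x}`. -/
def Indecomposable (M : Type*) [LinearOrder M] : Prop :=
  ∀ m : M, Nonempty (M ↪o {x : M // m ≤ x})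

section aux

variable {ι : Type*} [LinearOrder ι] {α : ι → Type*} [∀ i, LinearOrder (α i)]

private lemma aux_fst_le {a b : Σₗ i, α i} (h : a ≤ b) : a.1 ≤ b.1 := by
  rcases Sigma.Lex.le_def.1 h with h | ⟨h, _⟩
  exacts [h.le, h.le]

/-- Extract the second component of a lex-sigma element with known first component. -/
private def sget (i : ι) (u : Σₗ i', α i') (hu : u.1 = i) : α i := hu ▸ u.2

private lemma sget_lt {i : ι} {u v : Σₗ i', α i'} (h : u < v) (hu : u.1 = i) (hv : v.1 = i) :
    sget i u hu < sget i v hv := by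
  rcases Sigma.Lex.lt_def.1 h with h1 | ⟨h1, h2⟩
  · exact absurd (hu.trans hv.symm) h1.ne
  · obtain ⟨i1, x⟩ := u
    obtain ⟨i2, y⟩ := v
    dsimp at h1 hu hv ⊢
    subst h1
    subst hu
    exact h2

end aux

/-- If `M` is an indecomposable well-order which does not embed into the linear order `L`,
each `N i` (`i < n`) is isomorphic to `L` or to `M`, and `M·k = Σ_{j<k} M` embeds into the
lexicographic sum `Σ_{i<n} N i`, then at least `k` of the `N i` are isomorphic to `M`. -/
theorem statement2 {L M : Type*} [LinearOrder L] [LinearOrder M] [WellFoundedLT M]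
    (hM : Indecomposable M) (hnemb : ¬ Nonempty (M ↪o L))
    (n : ℕ) (N : Fin n → Type*) [∀ i, LinearOrder (N i)]
    (hN : ∀ i, Nonempty (N i ≃o L) ∨ Nonempty (N i ≃o M))
    (k : ℕ) (hemb : Nonempty ((Σₗ _ : Fin k, M) ↪o (Σₗ i, N i))) :
    k ≤ Nat.card {i : Fin n // Nonempty (N i ≃o M)} := by
  obtain ⟨f⟩ := hemb
  -- M is nonempty
  have hMne : Nonempty M := by
    by_contra h
    rw [not_nonempty_iff] at h
    exact hnemb ⟨OrderEmbedding.ofIsEmpty⟩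
  -- each copy has a maximal hit index
  have hmax : ∀ j : Fin k, ∃ x₀ : M,
      ∀ x : M, (f (toLex ⟨j, x⟩)).1 ≤ (f (toLex ⟨j, x₀⟩)).1 := by
    intro j
    set g : M → Fin n := fun x => (f (toLex ⟨j, x⟩)).1 with hg
    obtain ⟨i, hiS, hi⟩ := Set.Finite.exists_maximalFor id _ (Set.toFinite (Set.range g)) (Set.range_nonempty g)
    obtain ⟨x₀, rfl⟩ := hiS
    refine ⟨x₀, fun x => ?_⟩
    by_contra hlt
    push_neg at hlt
    exact hlt.not_ge (hi (Set.mem_range_self x) hlt.le)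
  choose x₀ hx₀ using hmax
  set idx : Fin k → Fin n := fun j => (f (toLex ⟨j, x₀ j⟩)).1 with hidx
  -- the index is constant on the final segment above x₀ j
  have hA : ∀ (j : Fin k) (x : M), x₀ j ≤ x → (f (toLex ⟨j, x⟩)).1 = idx j := by
    intro j x hx
    have hle : toLex (⟨j, x₀ j⟩ : Σ _ : Fin k, M) ≤ toLex ⟨j, x⟩ := Sigma.Lex.right _ _ hx
    exact le_antisymm (hx₀ j x) (aux_fst_le (f.le_iff_le.2 hle))
  -- indices of later copies are at least idx j
  have hB : ∀ (j j' : Fin k), j < j' → ∀ y : M, idx j ≤ (f (toLex ⟨j', y⟩)).1 := by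
    intro j j' hj y
    have hlt : toLex (⟨j, x₀ j⟩ : Σ _ : Fin k, M) < toLex ⟨j', y⟩ := Sigma.Lex.left _ _ hj
    exact aux_fst_le (f.le_iff_le.2 hlt.le)
  -- each N (idx j) is isomorphic to M
  have hIsoM : ∀ j : Fin k, Nonempty (N (idx j) ≃o M) := by
    intro j
    obtain ⟨s⟩ := hM (x₀ j)
    have e : M ↪o N (idx j) := by
      refine s.trans (OrderEmbedding.ofStrictMono
        (fun p => sget (idx j) (f (toLex ⟨j, p.1⟩)) (hA j p.1 p.2)) ?_)
      intro p q hpq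
      have hlt : toLex (⟨j, p.1⟩ : Σ _ : Fin k, M) < toLex ⟨j, q.1⟩ :=
        Sigma.Lex.right _ _ (Subtype.coe_lt_coe.2 hpq)
      exact sget_lt (f.lt_iff_lt.2 hlt) _ _
    rcases hN (idx j) with ⟨⟨ψ⟩⟩ | h
    · exact absurd ⟨e.trans ψ.toOrderEmbedding⟩ hnemb
    · exact h
  -- idx is injective
  have contra : ∀ j j' : Fin k, j < j' → idx j = idx j' → False := by
    intro j j' hj heq
    obtain ⟨φ⟩ := hIsoM j
    obtain ⟨s⟩ := hM (x₀ j)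
    have hB' : ∀ y : M, (f (toLex ⟨j', y⟩)).1 = idx j :=
      fun y => le_antisymm (heq ▸ hx₀ j' y) (hB j j' hj y)
    set a : M → M := fun x =>
      φ (sget (idx j) (f (toLex ⟨j, (s x).1⟩)) (hA j (s x).1 (s x).2)) with ha
    set b : M → M := fun y => φ (sget (idx j) (f (toLex ⟨j', y⟩)) (hB' y)) with hb
    have haS : StrictMono a := by
      intro x x' hx
      have hlt : toLex (⟨j, (s x).1⟩ : Σ _ : Fin k, M) < toLex ⟨j, (s x').1⟩ :=
        Sigma.Lex.right _ _ (Subtype.coe_lt_coe.2 (s.lt_iff_lt.2 hx))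
      exact φ.strictMono (sget_lt (f.lt_iff_lt.2 hlt) _ _)
    have key : ∀ x y : M, a x < b y := by
      intro x y
      have hlt : toLex (⟨j, (s x).1⟩ : Σ _ : Fin k, M) < toLex ⟨j', y⟩ :=
        Sigma.Lex.left _ _ hj
      exact φ.strictMono (sget_lt (f.lt_iff_lt.2 hlt) _ _)
    obtain ⟨m⟩ := hMne
    exact absurd (key (b m) m) (haS.le_apply (x := b m) : b m ≤ a (b m)).not_gt
  have hinj : Function.Injective
      (fun j : Fin k => (⟨idx j, hIsoM j⟩ : {i : Fin n // Nonempty (N i ≃o M)})) := by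
    intro j j' h
    have h' : idx j = idx j' := congrArg Subtype.val h
    by_contra hne
    rcases lt_or_gt_of_ne hne with hj | hj
    · exact contra j j' hj h'
    · exact contra j' j hj h'.symm
  calc k = Nat.card (Fin k) := by simp
    _ ≤ Nat.card {i : Fin n // Nonempty (N i ≃o M)} :=
        Nat.card_le_card_of_injective _ hinj
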